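/- In the scalar case d=1, where E‖X_N‖^q = e^{Nℓ(q)} exactly, the second moment of the RMC estimator evaluates in closed form to E'(Z_N²) = K^{-N}(e^{ℓ(2q)} + (K-1)e^{2ℓ(q)})^N, and hence var Z_N = K^{-N}(e^{2ℓ(q)}(K + γ_q))^N − e^{2Nℓ(q)} with γ_q = e^{ℓ(2q)-2ℓ(q)} − 1. In particular var Z_N / (E' Z_N)² = (1 + γ_q/K)^N − 1 ∼ Nγ_q/K as K → ∞ with N fixed. -/

import Mathlib

open MeasureTheory ProbabilityTheory Filter

noncomputable def rmcVal (lq l2q : ℝ) : ℕ → ℝ := fun cc =>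
  if cc = 0 then 1 else if cc = 1 then Real.exp lq else Real.exp l2q

lemma aux_indep_prod {Ω : Type*} [MeasurableSpace Ω] {μ : Measure Ω} [IsProbabilityMeasure μ]
    {ι : Type*} (f : ι → Ω → ℝ)
    (hi : iIndepFun f μ) (hm : ∀ i, Measurable (f i))
    (hint : ∀ i, Integrable (f i) μ) (s : Finset ι) :
    Integrable (fun ω => ∏ i ∈ s, f i ω) μ ∧
      ∫ ω, ∏ i ∈ s, f i ω ∂μ = ∏ i ∈ s, ∫ ω, f i ω ∂μ := by
  classical
  induction s using Finset.induction_on with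
  | empty => simp
  | @insert i s his ih =>
    obtain ⟨ih1, ih2⟩ := ih
    have hIndep : IndepFun (f i) (fun ω => ∏ j ∈ s, f j ω) μ := by
      have h := (hi.indepFun_finsetProd_of_notMem hm his).symm
      have : (∏ j ∈ s, f j) = fun ω => ∏ j ∈ s, f j ω := by
        funext ω; simp [Finset.prod_apply]
      rwa [this] at h
    constructor
    · have h := hIndep.integrable_mul (hint i) ih1
      have : (f i * fun ω => ∏ j ∈ s, f j ω) = fun ω => ∏ j ∈ insert i s, f j ω := by
        funext ω; simp [Finset.prod_insert his]
      rwa [this] at h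
    · have h := hIndep.integral_mul_eq_mul_integral (hint i).aestronglyMeasurable ih1.aestronglyMeasurable
      have he : (fun ω => ∏ j ∈ insert i s, f j ω) = fun ω => f i ω * ∏ j ∈ s, f j ω := by
        funext ω; simp [Finset.prod_insert his]
      rw [he, Finset.prod_insert his, ← ih2, ← h]
      rfl

lemma aux_tendsto (N : ℕ) (γ : ℝ) :
    Tendsto (fun K' : ℕ => (K' : ℝ) * ((1 + γ / (K' : ℝ)) ^ N - 1)) atTop
      (nhds (N * γ)) := by
  have hd : HasDerivAt (fun x : ℝ => (1 + γ * x) ^ N) ((N : ℝ) * γ) 0 := by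
    have h1 : HasDerivAt (fun x : ℝ => 1 + γ * x) γ 0 := by
      simpa using ((hasDerivAt_id (0:ℝ)).const_mul γ).const_add 1
    simpa using h1.fun_pow N
  have hslope := hasDerivAt_iff_tendsto_slope.mp hd
  have htend0 : Tendsto (fun K' : ℕ => ((K' : ℝ))⁻¹) atTop (nhdsWithin 0 {(0:ℝ)}ᶜ) := by
    rw [tendsto_nhdsWithin_iff]
    refine ⟨tendsto_inv_atTop_zero.comp tendsto_natCast_atTop_atTop, ?_⟩
    filter_upwards [eventually_ge_atTop 1] with K' hK'
    have : (0:ℝ) < (K':ℝ) := by exact_mod_cast Nat.lt_of_lt_of_le Nat.zero_lt_one hK'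
    simpa using inv_ne_zero this.ne'
  have h := hslope.comp htend0
  refine h.congr' ?_
  filter_upwards [eventually_ge_atTop 1] with K' hK'
  have hK : (0:ℝ) < (K':ℝ) := by exact_mod_cast Nat.lt_of_lt_of_le Nat.zero_lt_one hK'
  show slope (fun x : ℝ => (1 + γ * x) ^ N) 0 ((K':ℝ)⁻¹) = (K' : ℝ) * ((1 + γ / (K' : ℝ)) ^ N - 1)
  rw [slope_def_field, mul_zero, add_zero, one_pow, sub_zero]
  rw [div_eq_mul_inv γ, eq_comm, mul_comm, div_inv_eq_mul]

/-- In the scalar case `d = 1`, where `E|X_N|^q = e^{Nℓ(q)}` exactly, the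
second moment of the RMC estimator (given by the double path-sum formula) evaluates in closed
form: `E'(Z_N²) = K^{-N}(e^{ℓ(2q)} + (K-1)e^{2ℓ(q)})^N`; hence
`var Z_N = K^{-N}(e^{2ℓ(q)}(K + γ_q))^N − e^{2Nℓ(q)}` with `γ_q = e^{ℓ(2q)-2ℓ(q)} − 1`,
the relative variance is `(1 + γ_q/K)^N − 1`, which is asymptotic to `Nγ_q/K` as `K → ∞`
with `N` fixed. -/
theorem rmc_scalar_variance
    {Ω : Type*} [MeasurableSpace Ω] (μ : Measure Ω) [IsProbabilityMeasure μ]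
    {N K : ℕ} [NeZero N] [NeZero K]
    (A : Fin N → Fin K → Ω → ℝ)
    (hmeas : ∀ n k, Measurable (A n k))
    (hne : ∀ n k ω, A n k ω ≠ 0)
    (hindep : iIndepFun
      (fun (p : Fin N × Fin K) ω => A p.1 p.2 ω) μ)
    (hident : ∀ p p' : Fin N × Fin K,
      μ.map (fun ω => A p.1 p.2 ω) = μ.map (fun ω => A p'.1 p'.2 ω))
    (q lq l2q : ℝ)
    (hintq : Integrable (fun ω => |A 0 0 ω| ^ q) μ)
    (hint2q : Integrable (fun ω => |A 0 0 ω| ^ (2 * q)) μ)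
    (hlq : Real.exp lq = ∫ ω, |A 0 0 ω| ^ q ∂μ)
    (hl2q : Real.exp l2q = ∫ ω, |A 0 0 ω| ^ (2 * q) ∂μ)
    (γ : ℝ) (hγ : γ = Real.exp (l2q - 2 * lq) - 1)
    (DS : ℝ)
    (hDS : DS = (1 / (K : ℝ) ^ (2 * N)) *
      ∫ ω, ∑ j : Fin N → Fin K, ∑ j' : Fin N → Fin K,
        |∏ n : Fin N, A n (j n) ω| ^ q * |∏ n : Fin N, A n (j' n) ω| ^ q ∂μ) :
    DS = (1 / (K : ℝ) ^ N) *
        (Real.exp l2q + ((K : ℝ) - 1) * Real.exp (2 * lq)) ^ N ∧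
    DS - Real.exp (2 * N * lq) =
      (1 / (K : ℝ) ^ N) * (Real.exp (2 * lq) * ((K : ℝ) + γ)) ^ N -
        Real.exp (2 * N * lq) ∧
    (DS - Real.exp (2 * N * lq)) / Real.exp (2 * N * lq) =
      (1 + γ / (K : ℝ)) ^ N - 1 ∧
    Tendsto (fun K' : ℕ => (K' : ℝ) * ((1 + γ / (K' : ℝ)) ^ N - 1)) atTop
      (nhds (N * γ)) := by
  classical
  have hKpos : (0:ℝ) < (K:ℝ) := by exact_mod_cast Nat.pos_of_ne_zero (NeZero.ne K)
  have habs : ∀ (n : Fin N) (k : Fin K) (ω : Ω), (0:ℝ) < |A n k ω| :=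
    fun n k ω => abs_pos.mpr (hne n k ω)
  -- transfer of integrability/integrals along identical distribution
  have htrans : ∀ (r : ℝ) (n : Fin N) (k : Fin K),
      (Integrable (fun ω => |A 0 0 ω| ^ r) μ → Integrable (fun ω => |A n k ω| ^ r) μ) ∧
      ∫ ω, |A n k ω| ^ r ∂μ = ∫ ω, |A 0 0 ω| ^ r ∂μ := by
    intro r n k
    have hg : Measurable fun x : ℝ => |x| ^ r := by fun_prop
    have hmap : μ.map (fun ω => A n k ω) = μ.map (fun ω => A 0 0 ω) :=
      hident (n, k) (0, 0)
    constructor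
    · intro h
      have h1 : Integrable (fun x => |x| ^ r) (μ.map (fun ω => A 0 0 ω)) :=
        (integrable_map_measure hg.aestronglyMeasurable (hmeas 0 0).aemeasurable).2 h
      rw [← hmap] at h1
      exact (integrable_map_measure hg.aestronglyMeasurable (hmeas n k).aemeasurable).1 h1
    · rw [← integral_map (hmeas n k).aemeasurable hg.aestronglyMeasurable, hmap,
        integral_map (hmeas 0 0).aemeasurable hg.aestronglyMeasurable]
  have hval : ∀ cc : ℕ, cc ≤ 2 → ∀ (n : Fin N) (k : Fin K),
      Integrable (fun ω => |A n k ω| ^ ((cc : ℝ) * q)) μ ∧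
        ∫ ω, |A n k ω| ^ ((cc : ℝ) * q) ∂μ = rmcVal lq l2q cc := by
    intro cc hcc n k
    interval_cases cc
    · simp only [Nat.cast_zero, zero_mul, Real.rpow_zero]
      exact ⟨integrable_const 1, by simp [rmcVal]⟩
    · simp only [Nat.cast_one, one_mul]
      exact ⟨(htrans q n k).1 hintq, by rw [(htrans q n k).2, ← hlq]; simp [rmcVal]⟩
    · have h2 : ((2:ℕ) : ℝ) * q = 2 * q := by norm_num
      rw [h2]
      exact ⟨(htrans (2*q) n k).1 hint2q,
        by rw [(htrans (2*q) n k).2, ← hl2q]; simp [rmcVal]⟩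
  set c : (Fin N → Fin K) → (Fin N → Fin K) → Fin N × Fin K → ℕ :=
    fun j j' p => (if j p.1 = p.2 then 1 else 0) + (if j' p.1 = p.2 then 1 else 0) with hc
  have hcle : ∀ j j' p, c j j' p ≤ 2 := by
    intro j j' p
    simp only [hc]
    split <;> split <;> norm_num
  have hsingle : ∀ (jj : Fin N → Fin K) (n : Fin N) (ω : Ω),
      ∏ k : Fin K, |A n k ω| ^ ((((if jj n = k then 1 else 0) : ℕ) : ℝ) * q)
        = |A n (jj n) ω| ^ q := by
    intro jj n ω
    rw [Finset.prod_eq_single (jj n)]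
    · simp
    · intro k _ hk
      rw [if_neg (fun h => hk h.symm)]
      simp
    · simp
  have hsummand : ∀ j j' : Fin N → Fin K, ∀ ω : Ω,
      |∏ n : Fin N, A n (j n) ω| ^ q * |∏ n : Fin N, A n (j' n) ω| ^ q
      = ∏ p : Fin N × Fin K, |A p.1 p.2 ω| ^ ((c j j' p : ℝ) * q) := by
    intro j j' ω
    rw [Fintype.prod_prod_type]
    have hsplit : ∀ n : Fin N, ∏ k : Fin K, |A n k ω| ^ ((c j j' (n, k) : ℝ) * q)
        = |A n (j n) ω| ^ q * |A n (j' n) ω| ^ q := by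
      intro n
      have hterm : ∀ k : Fin K, |A n k ω| ^ ((c j j' (n, k) : ℝ) * q)
          = |A n k ω| ^ ((((if j n = k then 1 else 0) : ℕ) : ℝ) * q)
            * |A n k ω| ^ ((((if j' n = k then 1 else 0) : ℕ) : ℝ) * q) := by
        intro k
        rw [← Real.rpow_add (habs n k ω)]
        congr 1
        simp only [hc]
        push_cast
        ring
      rw [Finset.prod_congr rfl (fun k _ => hterm k), Finset.prod_mul_distrib,
        hsingle j n ω, hsingle j' n ω]
    have habsprod : ∀ jj : Fin N → Fin K,
        |∏ n : Fin N, A n (jj n) ω| ^ q = ∏ n : Fin N, |A n (jj n) ω| ^ q := by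
      intro jj
      rw [Finset.abs_prod, ← Real.finset_prod_rpow _ _ (fun i _ => abs_nonneg _)]
    rw [habsprod j, habsprod j', ← Finset.prod_mul_distrib]
    exact Finset.prod_congr rfl (fun n _ => (hsplit n).symm)
  have hFmeas : ∀ (j j' : Fin N → Fin K) (p : Fin N × Fin K),
      Measurable fun ω => |A p.1 p.2 ω| ^ ((c j j' p : ℝ) * q) := by
    intro j j' p
    have := hmeas p.1 p.2
    fun_prop
  have hFint : ∀ (j j' : Fin N → Fin K) (p : Fin N × Fin K),
      Integrable (fun ω => |A p.1 p.2 ω| ^ ((c j j' p : ℝ) * q)) μ :=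
    fun j j' p => (hval _ (hcle j j' p) p.1 p.2).1
  have hFindep : ∀ j j' : Fin N → Fin K,
      iIndepFun
        (fun (p : Fin N × Fin K) ω => |A p.1 p.2 ω| ^ ((c j j' p : ℝ) * q)) μ := by
    intro j j'
    exact hindep.comp (fun p (x : ℝ) => |x| ^ ((c j j' p : ℝ) * q)) (fun p => by fun_prop)
  have hsumInt : ∀ j j' : Fin N → Fin K,
      Integrable (fun ω =>
        |∏ n : Fin N, A n (j n) ω| ^ q * |∏ n : Fin N, A n (j' n) ω| ^ q) μ := by
    intro j j'
    have h := (aux_indep_prod _ (hFindep j j') (hFmeas j j') (hFint j j') Finset.univ).1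
    have heq : (fun ω => |∏ n : Fin N, A n (j n) ω| ^ q * |∏ n : Fin N, A n (j' n) ω| ^ q)
        = fun ω => ∏ p : Fin N × Fin K, |A p.1 p.2 ω| ^ ((c j j' p : ℝ) * q) :=
      funext (hsummand j j')
    rw [heq]
    exact h
  have hsumEval : ∀ j j' : Fin N → Fin K,
      ∫ ω, |∏ n : Fin N, A n (j n) ω| ^ q * |∏ n : Fin N, A n (j' n) ω| ^ q ∂μ
      = ∏ n : Fin N, (if j n = j' n then Real.exp l2q else Real.exp (2 * lq)) := by
    intro j j'
    have heq : (fun ω => |∏ n : Fin N, A n (j n) ω| ^ q * |∏ n : Fin N, A n (j' n) ω| ^ q)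
        = fun ω => ∏ p : Fin N × Fin K, |A p.1 p.2 ω| ^ ((c j j' p : ℝ) * q) :=
      funext (hsummand j j')
    show ∫ ω, (fun ω => _) ω ∂μ = _
    rw [heq, (aux_indep_prod _ (hFindep j j') (hFmeas j j') (hFint j j') Finset.univ).2,
      Finset.prod_congr rfl (fun p _ => (hval _ (hcle j j' p) p.1 p.2).2),
      Fintype.prod_prod_type]
    refine Finset.prod_congr rfl fun n _ => ?_
    by_cases h : j n = j' n
    · rw [if_pos h]
      have hk : ∀ k : Fin K, rmcVal lq l2q (c j j' (n, k))
          = if j' n = k then Real.exp l2q else 1 := by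
        intro k
        by_cases hk' : j' n = k <;> simp [hc, hk', h, rmcVal]
      rw [Finset.prod_congr rfl (fun k _ => hk k), Finset.prod_ite_eq]
      simp
    · rw [if_neg h]
      have hk : ∀ k : Fin K, rmcVal lq l2q (c j j' (n, k)) =
          (if j n = k then Real.exp lq else 1) * (if j' n = k then Real.exp lq else 1) := by
        intro k
        by_cases h1 : j n = k <;> by_cases h2 : j' n = k
        · exact absurd (h1.trans h2.symm) h
        all_goals simp [hc, h1, h2, rmcVal]
      rw [Finset.prod_congr rfl (fun k _ => hk k), Finset.prod_mul_distrib,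
        Finset.prod_ite_eq, Finset.prod_ite_eq]
      simp [← Real.exp_add, two_mul]
  have hDS2 : DS = (1 / (K:ℝ) ^ (2*N)) * ∑ j : Fin N → Fin K, ∑ j' : Fin N → Fin K,
      ∏ n : Fin N, (if j n = j' n then Real.exp l2q else Real.exp (2 * lq)) := by
    rw [hDS]
    congr 1
    rw [integral_finset_sum _ (fun j _ => integrable_finset_sum _ (fun j' _ => hsumInt j j'))]
    refine Finset.sum_congr rfl fun j _ => ?_
    rw [integral_finset_sum _ (fun j' _ => hsumInt j j')]
    exact Finset.sum_congr rfl fun j' _ => hsumEval j j'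
  have hinner : ∀ j : Fin N → Fin K,
      (∑ j' : Fin N → Fin K,
        ∏ n : Fin N, (if j n = j' n then Real.exp l2q else Real.exp (2 * lq)))
      = (Real.exp l2q + ((K:ℝ) - 1) * Real.exp (2 * lq)) ^ N := by
    intro j
    rw [← Fintype.piFinset_univ,
      ← Finset.prod_univ_sum (fun _ : Fin N => (Finset.univ : Finset (Fin K)))
        (fun n k => if j n = k then Real.exp l2q else Real.exp (2 * lq))]
    have hk : ∀ x : Fin K,
        (∑ k : Fin K, if x = k then Real.exp l2q else Real.exp (2 * lq))
        = Real.exp l2q + ((K:ℝ) - 1) * Real.exp (2 * lq) := by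
      intro x
      have h1 : (∑ k : Fin K, if x = k then Real.exp l2q else Real.exp (2 * lq))
          = ∑ k : Fin K,
            ((if x = k then Real.exp l2q - Real.exp (2 * lq) else 0) + Real.exp (2 * lq)) := by
        refine Finset.sum_congr rfl fun k _ => ?_
        by_cases hxk : x = k <;> simp [hxk]
      rw [h1, Finset.sum_add_distrib, Finset.sum_ite_eq, Finset.sum_const, Finset.card_univ]
      simp only [Finset.mem_univ, if_pos, Fintype.card_fin, nsmul_eq_mul]
      ring
    rw [Finset.prod_congr rfl (fun n _ => hk (j n)), Finset.prod_const, Finset.card_univ,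
      Fintype.card_fin]
  have hKN : ((K:ℝ)) ^ N ≠ 0 := pow_ne_zero _ hKpos.ne'
  have h1 : DS = (1 / (K : ℝ) ^ N) *
      (Real.exp l2q + ((K : ℝ) - 1) * Real.exp (2 * lq)) ^ N := by
    rw [hDS2, Finset.sum_congr rfl (fun j _ => hinner j), Finset.sum_const,
      Finset.card_univ]
    have hcard : (Fintype.card (Fin N → Fin K)) = K ^ N := by
      simp [Fintype.card_fun]
    rw [hcard, nsmul_eq_mul, two_mul, pow_add]
    push_cast
    field_simp
  have hfac : Real.exp l2q + ((K:ℝ) - 1) * Real.exp (2 * lq)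
      = Real.exp (2 * lq) * ((K:ℝ) + γ) := by
    rw [hγ, Real.exp_sub]
    field_simp
    ring
  have h2 : DS - Real.exp (2 * N * lq) =
      (1 / (K : ℝ) ^ N) * (Real.exp (2 * lq) * ((K : ℝ) + γ)) ^ N -
        Real.exp (2 * N * lq) := by
    rw [h1, hfac]
  have hEpow : Real.exp (2 * (N:ℝ) * lq) = (Real.exp (2 * lq)) ^ N := by
    rw [← Real.exp_nat_mul]
    congr 1
    ring
  have hE : Real.exp (2 * (N:ℝ) * lq) ≠ 0 := Real.exp_ne_zero _
  have hDSE : DS = Real.exp (2 * (N:ℝ) * lq) * (1 + γ / (K:ℝ)) ^ N := by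
    rw [h1, hfac, hEpow, mul_pow]
    have hgk : (1 + γ / (K:ℝ)) = ((K:ℝ) + γ) / (K:ℝ) := by field_simp
    rw [hgk, div_pow]
    field_simp
  have h3 : (DS - Real.exp (2 * N * lq)) / Real.exp (2 * N * lq) =
      (1 + γ / (K : ℝ)) ^ N - 1 := by
    rw [hDSE]
    field_simp
  exact ⟨h1, h2, h3, aux_tendsto N γ⟩
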